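/- Let X be a real Hilbert space, X_N ⊆ X a linear subspace, F : X → X* Lipschitz continuous with constant L_F > 0 and strongly monotone with constant ν > 0, and u* ∈ X with ⟨F(u*), v⟩ = 0 for all v ∈ X. For each u ∈ X let a(u;·,·) be a bilinear form on X with a(u;v,w) ≤ β‖v‖_X‖w‖_X for all v, w ∈ X (β > 0 independent of u), and set ⟨f(u),w⟩ = a(u;u,w) − ⟨F(u),w⟩. Suppose u_Nⁿ, u_Nⁿ⁺¹ ∈ X_N satisfy a(u_Nⁿ; u_Nⁿ⁺¹, v) = ⟨f(u_Nⁿ), v⟩ for all v ∈ X_N, and ũ ∈ X is the elliptic reconstruction satisfying a(u_Nⁿ; ũ, v) = ⟨f(u_Nⁿ), v⟩ for all v ∈ X. Then ν‖u* − u_Nⁿ⁺¹‖_X ≤ β‖ũ − u_Nⁿ⁺¹‖_X + (β + L_F)‖u_Nⁿ⁺¹ − u_Nⁿ‖_X. -/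

import Mathlib

/-- Intermediate a posteriori error bound in terms of the (linear) elliptic
reconstruction `ũ` of the discrete iterate. -/
theorem ilg_aposteriori_via_reconstruction
    {X : Type*} [NormedAddCommGroup X] [InnerProductSpace ℝ X] [CompleteSpace X]
    (XN : Submodule ℝ X)
    (F : X → X →L[ℝ] ℝ) (L ν : ℝ) (hL : 0 < L) (hν : 0 < ν)
    (hlip : ∀ u v w : X, |F u w - F v w| ≤ L * ‖u - v‖ * ‖w‖)
    (hmono : ∀ u v : X, ν * ‖u - v‖ ^ 2 ≤ F u (u - v) - F v (u - v))
    (ustar : X) (hustar : ∀ v : X, F ustar v = 0)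
    (a : X → X →ₗ[ℝ] X →ₗ[ℝ] ℝ)
    (β : ℝ) (hβ : 0 < β)
    (hbdd : ∀ u v w : X, a u v w ≤ β * ‖v‖ * ‖w‖)
    (un un' : X) (hun : un ∈ XN) (hun' : un' ∈ XN)
    (hiter : ∀ v ∈ XN, a un un' v = a un un v - F un v)
    (utilde : X)
    (hrec : ∀ v : X, a un utilde v = a un un v - F un v) :
    ν * ‖ustar - un'‖ ≤ β * ‖utilde - un'‖ + (β + L) * ‖un' - un‖ := by
  set e := ustar - un' with he
  have h3 : ν * ‖e‖ ^ 2 ≤ - F un' e := by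
    have := hmono ustar un'
    rw [← he, hustar (ustar - un')] at this
    linarith
  have hF : F un e = a un un e - a un utilde e := by
    have := hrec e; linarith
  have h4 : F un e - F un' e ≤ L * ‖un - un'‖ * ‖e‖ :=
    (le_abs_self _).trans (hlip un un' e)
  have h5 : a un utilde e - a un un e ≤ β * ‖utilde - un‖ * ‖e‖ := by
    have h := hbdd un (utilde - un) e
    have h' : (a un) (utilde - un) e = a un utilde e - a un un e := by
      have hs : (a un) (utilde - un) = a un utilde - a un un := map_sub _ _ _
      rw [hs, LinearMap.sub_apply]
    linarith
  have hnorm1 : ‖utilde - un‖ ≤ ‖utilde - un'‖ + ‖un' - un‖ := by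
    calc ‖utilde - un‖ = ‖(utilde - un') + (un' - un)‖ := by abel_nf
    _ ≤ ‖utilde - un'‖ + ‖un' - un‖ := norm_add_le _ _
  have hnorm2 : ‖un - un'‖ = ‖un' - un‖ := norm_sub_rev _ _
  have he0 : 0 ≤ ‖e‖ := norm_nonneg _
  have key : ν * ‖e‖ ^ 2 ≤ (β * ‖utilde - un'‖ + (β + L) * ‖un' - un‖) * ‖e‖ := by
    have hb := mul_le_mul_of_nonneg_right (mul_le_mul_of_nonneg_left hnorm1 hβ.le) he0
    calc ν * ‖e‖ ^ 2 ≤ L * ‖un - un'‖ * ‖e‖ + β * ‖utilde - un‖ * ‖e‖ := by linarith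
    _ ≤ L * ‖un' - un‖ * ‖e‖ + β * (‖utilde - un'‖ + ‖un' - un‖) * ‖e‖ := by
        rw [hnorm2] at *; linarith
    _ = (β * ‖utilde - un'‖ + (β + L) * ‖un' - un‖) * ‖e‖ := by ring
  rcases eq_or_lt_of_le he0 with h0 | h0
  · rw [← h0, mul_zero]
    positivity
  · have := (mul_le_mul_iff_left₀ h0).mp (by nlinarith : ν * ‖e‖ * ‖e‖ ≤ (β * ‖utilde - un'‖ + (β + L) * ‖un' - un‖) * ‖e‖)
    linarith
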